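/- There do not exist positive integers X, Y, Z such that X^4 + 4*Y^4 = Z^2. -/

import Mathlib

private theorem descent_x4_4y4 : ∀ N : ℕ, ∀ x y c : ℤ, c.natAbs ≤ N → 0 < x → 0 < y →
    x ^ 4 + 4 * y ^ 4 ≠ c ^ 2 := by
  intro N
  induction N with
  | zero =>
    intro x y c hc hx hy heq
    have hc0 : c = 0 := Int.natAbs_eq_zero.mp (Nat.le_zero.mp hc)
    subst hc0
    nlinarith [pow_pos hx 4, pow_pos hy 4]
  | succ N IH =>
    intro x y c hc hx hy heq
    have hx4 : 0 < x ^ 4 := pow_pos hx 4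
    have hy4 : 0 < y ^ 4 := pow_pos hy 4
    have hcne : c ≠ 0 := by
      intro h; rw [h] at heq; nlinarith
    by_cases hg : Int.gcd x y = 1
    · -- coprime case
      -- replace c by its absolute value
      set C : ℤ := (c.natAbs : ℤ) with hC
      have hCabs : C = |c| := (Int.abs_eq_natAbs c).symm
      have hCpos : 0 < C := by
        rw [hCabs]; exact abs_pos.mpr hcne
      have hCsq : C ^ 2 = c ^ 2 := by rw [hCabs, sq_abs]
      have heqC : x ^ 4 + 4 * y ^ 4 = C ^ 2 := by rw [hCsq]; exact heq
      rcases Int.even_or_odd x with hxe | hxo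
      · -- x even : reduce with smaller c
        obtain ⟨u, rfl⟩ := hxe
        have hu : 0 < u := by linarith
        have hceven : Even (c ^ 2) := ⟨8 * u ^ 4 + 2 * y ^ 4, by linear_combination -heq⟩
        have hce : Even c := (Int.even_pow.mp hceven).1
        obtain ⟨w, rfl⟩ := hce
        have hw : w ≠ 0 := by rintro rfl; simp at hcne
        have heq2 : y ^ 4 + 4 * u ^ 4 = w ^ 2 := by
          have h4 : 4 * (y ^ 4 + 4 * u ^ 4) = 4 * w ^ 2 := by linear_combination heq
          linarith
        have hwlt : w.natAbs ≤ N := by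
          have h1 : (w + w).natAbs = 2 * w.natAbs := by
            rw [show w + w = 2 * w by ring, Int.natAbs_mul]; rfl
          have h2 : 1 ≤ w.natAbs := Int.natAbs_pos.mpr hw
          omega
        exact IH y u w hwlt hy hu heq2
      · -- x odd : Pythagorean descent
        have hcopxy : IsCoprime x y := Int.isCoprime_iff_gcd_eq_one.mpr hg
        have hxodd : Odd x := hxo
        obtain ⟨x', hx'⟩ := hxo
        have hcopx2 : IsCoprime x 2 := ⟨1, -x', by rw [hx']; ring⟩
        have hcop : IsCoprime (x ^ 2) (2 * y ^ 2) :=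
          IsCoprime.mul_right (hcopx2.pow_left) (hcopxy.pow)
        have hgcd : Int.gcd (x ^ 2) (2 * y ^ 2) = 1 :=
          Int.isCoprime_iff_gcd_eq_one.mp hcop
        have ht : PythagoreanTriple (x ^ 2) (2 * y ^ 2) C := by
          show x ^ 2 * x ^ 2 + 2 * y ^ 2 * (2 * y ^ 2) = C * C
          have := heqC
          nlinarith [heqC]
        have hpar : x ^ 2 % 2 = 1 := Int.odd_iff.mp (hxodd.pow)
        obtain ⟨m, n, hxmn, hymn, hcmn, hgmn, hparmn, hm0⟩ :=
          PythagoreanTriple.coprime_classification' ht hgcd hpar hCpos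
        have hy2 : y ^ 2 = m * n := by linarith
        have hmn_pos : 0 < m * n := by rw [← hy2]; positivity
        have hm_pos : 0 < m := by
          rcases lt_or_eq_of_le hm0 with h | h
          · exact h
          · exfalso; rw [← h] at hmn_pos; simp at hmn_pos
        have hn_pos : 0 < n := by nlinarith
        -- parity: m odd, n even
        have hpar2 : m % 2 = 1 ∧ n % 2 = 0 := by
          rcases hparmn with ⟨hm2, hn2⟩ | h
          · exfalso
            obtain ⟨m', rfl⟩ : (2 : ℤ) ∣ m := Int.dvd_of_emod_eq_zero hm2
            obtain ⟨n', rfl⟩ := Int.odd_iff.mpr hn2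
            have hkey : 4 * (m' ^ 2 - n' ^ 2 - n' - x' ^ 2 - x') = 2 := by
              linear_combination (by rw [hx'] : x ^ 2 = (2 * x' + 1) ^ 2) - hxmn
            set K := m' ^ 2 - n' ^ 2 - n' - x' ^ 2 - x' with hK
            omega
          · exact h
        obtain ⟨hm2, hn2⟩ := hpar2
        have hcop_mn : IsCoprime m n := Int.isCoprime_iff_gcd_eq_one.mpr hgmn
        obtain ⟨p, hp⟩ := Int.sq_of_isCoprime hcop_mn hy2.symm
        have hp2 : m = p ^ 2 := by
          rcases hp with h | h
          · exact h
          · exfalso; linarith [sq_nonneg p]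
        obtain ⟨q, hq⟩ := Int.sq_of_isCoprime hcop_mn.symm (by linarith : n * m = y ^ 2)
        have hq2 : n = q ^ 2 := by
          rcases hq with h | h
          · exact h
          · exfalso; linarith [sq_nonneg q]
        -- coprimality of m - n and m + n
        have hodd_sum : (m + n) % 2 = 1 := by omega
        have hodd_diff : (m - n) % 2 = 1 := by omega
        have hcop_sd : IsCoprime (m - n) (m + n) := by
          rw [Int.isCoprime_iff_gcd_eq_one]
          set k := Int.gcd (m - n) (m + n) with hk
          have k1 : (k : ℤ) ∣ m - n := Int.gcd_dvd_left _ _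
          have k2 : (k : ℤ) ∣ m + n := Int.gcd_dvd_right _ _
          have h2m : (k : ℤ) ∣ 2 * m := by
            have := dvd_add k1 k2
            rwa [show m - n + (m + n) = 2 * m by ring] at this
          have h2n : (k : ℤ) ∣ 2 * n := by
            have := dvd_sub k2 k1
            rwa [show m + n - (m - n) = 2 * n by ring] at this
          have hk2 : (k : ℤ) ∣ (Int.gcd (2 * m) (2 * n) : ℤ) := Int.natCast_dvd_natCast.mpr (Int.dvd_gcd h2m h2n)
          rw [Int.gcd_mul_left, hgmn] at hk2
          have hk2' : k ∣ 2 := by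
            have : (k : ℤ) ∣ (2 : ℤ) := by simpa using hk2
            exact_mod_cast this
          rcases (Nat.dvd_prime Nat.prime_two).mp hk2' with h | h
          · exact h
          · exfalso
            have h2 : ((2 : ℕ) : ℤ) ∣ m + n := h ▸ k2
            have h3 : (2 : ℤ) ∣ m + n := by exact_mod_cast h2
            obtain ⟨d, hd⟩ := h3
            omega
        have hfac : (m - n) * (m + n) = x ^ 2 := by linear_combination -hxmn
        obtain ⟨t, ht'⟩ := Int.sq_of_isCoprime hcop_sd hfac
        obtain ⟨s, hs'⟩ := Int.sq_of_isCoprime hcop_sd.symm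
          (by linear_combination -hxmn : (m + n) * (m - n) = x ^ 2)
        have hs2 : m + n = s ^ 2 := by
          rcases hs' with h | h
          · exact h
          · exfalso; linarith [sq_nonneg s]
        have hx2pos : 0 < x ^ 2 := by positivity
        have ht2 : m - n = t ^ 2 := by
          rcases ht' with h | h
          · exact h
          · exfalso
            have h5 : (m - n) * (m + n) ≤ 0 := by
              rw [h]
              exact mul_nonpos_of_nonpos_of_nonneg (by linarith [sq_nonneg t]) (by linarith)
            linarith
        -- s and t are odd
        have hs_odd : s % 2 = 1 := by
          rcases Int.even_or_odd s with ⟨s0, rfl⟩ | hso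
          · exfalso
            have : m + n = 4 * s0 ^ 2 := by linear_combination hs2
            set K := s0 ^ 2
            omega
          · exact Int.odd_iff.mp hso
        have ht_odd : t % 2 = 1 := by
          rcases Int.even_or_odd t with ⟨t0, rfl⟩ | hto
          · exfalso
            have : m - n = 4 * t0 ^ 2 := by linear_combination ht2
            set K := t0 ^ 2
            omega
          · exact Int.odd_iff.mp hto
        obtain ⟨s0, hs0⟩ := Int.odd_iff.mpr hs_odd
        obtain ⟨t0, ht0⟩ := Int.odd_iff.mpr ht_odd
        set a := s0 + t0 + 1 with ha
        set b := s0 - t0 with hb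
        have hsab : s = a + b := by rw [hs0]; ring
        have htab : t = a - b := by rw [ht0]; ring
        have e1 : (a + b) ^ 2 = p ^ 2 + q ^ 2 := by rw [← hsab, ← hs2, hp2, hq2]
        have e2 : (a - b) ^ 2 = p ^ 2 - q ^ 2 := by rw [← htab, ← ht2, hp2, hq2]
        have hab_p : a ^ 2 + b ^ 2 = p ^ 2 := by
          have h2 : 2 * (a ^ 2 + b ^ 2) = 2 * p ^ 2 := by linear_combination e1 + e2
          linarith
        have hab_q : q ^ 2 = 2 * (a * b) := by
          have h2 : 2 * q ^ 2 = 2 * (2 * (a * b)) := by linear_combination e2 - e1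
          linarith
        have hq_even : Even q :=
          (Int.even_pow.mp (⟨a * b, by linarith⟩ : Even (q ^ 2))).1
        obtain ⟨r, rfl⟩ := hq_even
        have hab_r : a * b = 2 * r ^ 2 := by
          have h2 : 2 * (a * b) = 2 * (2 * r ^ 2) := by linear_combination -hab_q
          linarith
        have hr_ne : r ≠ 0 := by
          rintro rfl
          simp at hq2
          omega
        have hab_ne : a * b ≠ 0 := by
          rw [hab_r]; positivity
        have ha_ne : a ≠ 0 := fun h => hab_ne (by rw [h]; ring)
        have hb_ne : b ≠ 0 := fun h => hab_ne (by rw [h]; ring)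
        -- a and b coprime
        have hcop_ts : IsCoprime t s := by
          have h1 : IsCoprime (t ^ 2) (s ^ 2) := by rw [← ht2, ← hs2]; exact hcop_sd
          exact (h1.of_isCoprime_of_dvd_left (dvd_pow_self t two_ne_zero)).of_isCoprime_of_dvd_right
            (dvd_pow_self s two_ne_zero)
        have hcop_ab : IsCoprime a b := by
          rw [Int.isCoprime_iff_gcd_eq_one]
          set k := Int.gcd a b with hk
          have k1 : (k : ℤ) ∣ a := Int.gcd_dvd_left _ _
          have k2 : (k : ℤ) ∣ b := Int.gcd_dvd_right _ _
          have hkt : (k : ℤ) ∣ t := by rw [htab]; exact dvd_sub k1 k2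
          have hks : (k : ℤ) ∣ s := by rw [hsab]; exact dvd_add k1 k2
          have : (k : ℤ) ∣ (Int.gcd t s : ℤ) := Int.natCast_dvd_natCast.mpr (Int.dvd_gcd hkt hks)
          rw [Int.isCoprime_iff_gcd_eq_one.mp hcop_ts] at this
          have hk1 : k ∣ 1 := by exact_mod_cast this
          exact Nat.dvd_one.mp hk1
        -- one of a, b is even
        have hab_even : Even a ∨ Even b := by
          rw [← Int.even_mul]
          exact ⟨r ^ 2, by linarith⟩
        -- bound for descent
        have hp_ne : p ≠ 0 := by rintro rfl; simp at hp2; omega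
        have hpbound : p.natAbs ≤ N := by
          have h1 : (1 : ℤ) ≤ (p.natAbs : ℤ) := by
            exact_mod_cast Int.natAbs_pos.mpr hp_ne
          have habs : (p.natAbs : ℤ) ^ 2 = p ^ 2 := by
            rw [← Int.abs_eq_natAbs, sq_abs]
          have e_p : (p.natAbs : ℤ) ≤ (p.natAbs : ℤ) ^ 2 := le_self_pow₀ h1 two_ne_zero
          have e_m : m ≤ m ^ 2 := le_self_pow₀ hm_pos two_ne_zero
          have e_n : (1 : ℤ) ≤ n ^ 2 := by
            have := pow_pos hn_pos 2
            linarith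
          have h2 : (p.natAbs : ℤ) < (c.natAbs : ℤ) := by
            rw [← hC]
            linarith [habs, hp2, hcmn]
          have h3 : p.natAbs < c.natAbs := by exact_mod_cast h2
          omega
        -- finish: from even one of a, b construct a smaller solution
        have key : ∀ A B : ℤ, A ≠ 0 → B ≠ 0 → IsCoprime A B → Even A →
            A * B = 2 * r ^ 2 → A ^ 2 + B ^ 2 = p ^ 2 → False := by
          intro A B hA hB hAB hAe hprod hsum
          obtain ⟨a1, rfl⟩ := hAe
          have ha1_ne : a1 ≠ 0 := fun h => hA (by rw [h]; ring)
          have hcop1 : IsCoprime a1 B :=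
            hAB.of_isCoprime_of_dvd_left ⟨2, by ring⟩
          have hprod1 : a1 * B = r ^ 2 := by
            have h2 : 2 * (a1 * B) = 2 * r ^ 2 := by linear_combination hprod
            linarith
          obtain ⟨w, hw⟩ := Int.sq_of_isCoprime hcop1.symm
            (by linear_combination hprod1 : B * a1 = r ^ 2)
          obtain ⟨v, hv⟩ := Int.sq_of_isCoprime hcop1 hprod1
          have hw_ne : w ≠ 0 := by
            rintro rfl; rcases hw with h | h <;> simp at h <;> exact hB h
          have hv_ne : v ≠ 0 := by
            rintro rfl; rcases hv with h | h <;> simp at h <;> exact ha1_ne h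
          have hfin : w ^ 4 + 4 * v ^ 4 = p ^ 2 := by
            rcases hw with h | h <;> rcases hv with h' | h' <;>
              rw [h, h'] at hsum <;> linear_combination hsum
          -- cast to positive witnesses
          set W : ℤ := (w.natAbs : ℤ) with hW
          set V : ℤ := (v.natAbs : ℤ) with hV
          have hW4 : W ^ 4 = w ^ 4 := by
            rw [hW, ← Int.abs_eq_natAbs, pow_abs]
            exact abs_of_nonneg (by positivity)
          have hV4 : V ^ 4 = v ^ 4 := by
            rw [hV, ← Int.abs_eq_natAbs, pow_abs]
            exact abs_of_nonneg (by positivity)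
          have hWpos : 0 < W := by
            rw [hW]; exact_mod_cast Int.natAbs_pos.mpr hw_ne
          have hVpos : 0 < V := by
            rw [hV]; exact_mod_cast Int.natAbs_pos.mpr hv_ne
          exact IH W V p hpbound hWpos hVpos (by rw [hW4, hV4]; exact hfin)
        rcases hab_even with hAe | hBe
        · exact key a b ha_ne hb_ne hcop_ab hAe hab_r hab_p
        · refine key b a hb_ne ha_ne hcop_ab.symm hBe ?_ ?_
          · rw [mul_comm]; exact hab_r
          · linarith [hab_p]
    · -- gcd > 1 : reduce
      have hgne : Int.gcd x y ≠ 0 := fun h => hx.ne' (Int.gcd_eq_zero_iff.mp h).1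
      set G : ℕ := Int.gcd x y with hG
      have hG2 : 2 ≤ G := by omega
      have hGpos : (0 : ℤ) < (G : ℤ) := by exact_mod_cast Nat.pos_of_ne_zero hgne
      obtain ⟨x1, hx1⟩ : ((G : ℤ)) ∣ x := Int.gcd_dvd_left x y
      obtain ⟨y1, hy1⟩ : ((G : ℤ)) ∣ y := Int.gcd_dvd_right x y
      have hdvd : ((G : ℤ)) ^ 2 ∣ c := by
        have h4 : (((G : ℤ)) ^ 2) ^ 2 ∣ c ^ 2 :=
          ⟨x1 ^ 4 + 4 * y1 ^ 4, by rw [← heq, hx1, hy1]; ring⟩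
        exact (Int.pow_dvd_pow_iff two_ne_zero).mp h4
      obtain ⟨c1, hc1⟩ := hdvd
      have hG4 : ((G : ℤ)) ^ 4 ≠ 0 := by positivity
      have heq1 : x1 ^ 4 + 4 * y1 ^ 4 = c1 ^ 2 := by
        apply mul_left_cancel₀ hG4
        rw [hx1, hy1] at heq
        linear_combination heq + (by rw [hc1] : c ^ 2 = ((G:ℤ) ^ 2 * c1) ^ 2)
      have hx1pos : 0 < x1 := by
        by_contra hle
        push_neg at hle
        have h1 : (G : ℤ) * x1 ≤ 0 := mul_nonpos_of_nonneg_of_nonpos hGpos.le hle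
        rw [← hx1] at h1
        linarith
      have hy1pos : 0 < y1 := by
        by_contra hle
        push_neg at hle
        have h1 : (G : ℤ) * y1 ≤ 0 := mul_nonpos_of_nonneg_of_nonpos hGpos.le hle
        rw [← hy1] at h1
        linarith
      have hc1ne : c1 ≠ 0 := by
        rintro rfl; rw [mul_zero] at hc1; exact hcne hc1
      have hbound : c1.natAbs ≤ N := by
        have h1 : c.natAbs = G ^ 2 * c1.natAbs := by
          rw [hc1, Int.natAbs_mul, Int.natAbs_pow]
          simp
        have h2 : 1 ≤ c1.natAbs := Int.natAbs_pos.mpr hc1ne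
        have h3 : 4 ≤ G ^ 2 := by
          have h5 : 2 * 2 ≤ G * G := Nat.mul_le_mul hG2 hG2
          rw [pow_two]
          omega
        have h4 : 4 * c1.natAbs ≤ G ^ 2 * c1.natAbs := Nat.mul_le_mul_right _ h3
        omega
      exact IH x1 y1 c1 hbound hx1pos hy1pos heq1

/-- There do not exist positive integers `X, Y, Z` such that `X^4 + 4*Y^4 = Z^2`. -/
theorem no_pos_int_sol_x4_add_4y4_eq_z2 :
    ¬ ∃ X Y Z : ℤ, 0 < X ∧ 0 < Y ∧ 0 < Z ∧ X ^ 4 + 4 * Y ^ 4 = Z ^ 2 := by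
  rintro ⟨X, Y, Z, hX, hY, hZ, heq⟩
  exact descent_x4_4y4 Z.natAbs X Y Z le_rfl hX hY heq
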